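/- The polynomial e_2 · ω_1^{a-2b} ω_2^b = (x_2^{a-2b} + (x_1+x_2)^{a-2b}) x_1^b x_2^b (x_1+x_2)^b in F_2[x_1,x_2], where a > 2b > 0 and a + b = 2^i + 2^{i-1}, has zero coefficient on the monomial x_1^{2^i} x_2^{2^{i-1}}. -/
import Mathlib


open MvPolynomial

private theorem parity_lem : ∀ d : ℕ, ∀ m : ℕ, 0 < d → d < 2 ^ m →
    2 ∣ Nat.choose (2 ^ m + 2 * d) (2 ^ m + d) := by
  intro d
  induction d using Nat.strong_induction_on with
  | _ d ih =>
    intro m hd hdm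
    have hm : 1 ≤ m := by
      by_contra h
      interval_cases m
      omega
    have key : Nat.choose (2 ^ m + 2 * d) (2 ^ m + d) ≡
        Nat.choose ((2 ^ m + 2 * d) % 2) ((2 ^ m + d) % 2) *
          Nat.choose ((2 ^ m + 2 * d) / 2) ((2 ^ m + d) / 2) [MOD 2] :=
      Choose.choose_modEq_choose_mod_mul_choose_div_nat
    have h2m : 2 ^ m % 2 = 0 := by
      have : (2:ℕ) ∣ 2 ^ m := dvd_pow_self 2 (by omega)
      omega
    rcases Nat.even_or_odd d with he | ho
    · obtain ⟨d', hd'⟩ := he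
      have hmod : (2 ^ m + 2 * d) % 2 = 0 ∧ (2 ^ m + d) % 2 = 0 := by omega
      have hpow : 2 ^ m = 2 * 2 ^ (m - 1) := by
        rw [← pow_succ']; congr 1; omega
      have hdiv1 : (2 ^ m + 2 * d) / 2 = 2 ^ (m-1) + 2 * d' := by omega
      have hdiv2 : (2 ^ m + d) / 2 = 2 ^ (m-1) + d' := by omega
      have hrec := ih d' (by omega) (m-1) (by omega) (by omega)
      rw [hmod.1, hmod.2, hdiv1, hdiv2] at key
      simp only [Nat.choose_self, one_mul] at key
      exact (Nat.modEq_zero_iff_dvd.mp (key.trans (Nat.modEq_zero_iff_dvd.mpr hrec)))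
    · have hmod1 : (2 ^ m + 2 * d) % 2 = 0 := by omega
      have hmod2 : (2 ^ m + d) % 2 = 1 := by
        rcases ho with ⟨t, ht⟩; omega
      rw [hmod1, hmod2] at key
      simp only [Nat.choose_eq_zero_of_lt (by norm_num : (0:ℕ) < 1), zero_mul] at key
      exact Nat.modEq_zero_iff_dvd.mp key

private theorem finsupp_pair_eq (s t u v : ℕ) :
    (Finsupp.single (0 : Fin 2) s + Finsupp.single (1 : Fin 2) t =
      Finsupp.single (0 : Fin 2) u + Finsupp.single (1 : Fin 2) v) ↔ (s = u ∧ t = v) := by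
  constructor
  · intro h
    have h0 := DFunLike.congr_fun h 0
    have h1 := DFunLike.congr_fun h 1
    simp [Finsupp.single_apply] at h0 h1
    exact ⟨h0, h1⟩
  · rintro ⟨rfl, rfl⟩; rfl

private theorem coeff_aux (p q r m n : ℕ) :
    MvPolynomial.coeff (Finsupp.single (0 : Fin 2) m + Finsupp.single (1 : Fin 2) n)
      (X 0 ^ p * X 1 ^ q * (X 0 + X 1) ^ r : MvPolynomial (Fin 2) (ZMod 2)) =
    if m + n = p + q + r ∧ p ≤ m then (Nat.choose r (m - p) : ZMod 2) else 0 := by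
  rw [add_pow, Finset.mul_sum, MvPolynomial.coeff_sum]
  have hterm : ∀ k ∈ Finset.range (r + 1),
      MvPolynomial.coeff (Finsupp.single (0 : Fin 2) m + Finsupp.single (1 : Fin 2) n)
        (X 0 ^ p * X 1 ^ q * (X 0 ^ k * X 1 ^ (r - k) * (Nat.choose r k : MvPolynomial (Fin 2) (ZMod 2)))) =
      if p + k = m ∧ q + (r - k) = n then (Nat.choose r k : ZMod 2) else 0 := by
    intro k _
    have heq : (X 0 ^ p * X 1 ^ q * (X 0 ^ k * X 1 ^ (r - k) * (Nat.choose r k : MvPolynomial (Fin 2) (ZMod 2))))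
        = monomial (Finsupp.single (0 : Fin 2) (p + k) + Finsupp.single (1 : Fin 2) (q + (r - k)))
            ((Nat.choose r k : ZMod 2)) := by
      rw [show ((Nat.choose r k : MvPolynomial (Fin 2) (ZMod 2))) = C ((Nat.choose r k : ZMod 2)) by
        simp]
      rw [X_pow_eq_monomial, X_pow_eq_monomial, X_pow_eq_monomial, X_pow_eq_monomial, C_apply]
      simp only [monomial_mul, one_mul, mul_one]
      congr 1
      simp only [Finsupp.single_add, add_zero]
      abel
    rw [heq, MvPolynomial.coeff_monomial]
    by_cases h : p + k = m ∧ q + (r - k) = n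
    · rw [if_pos h, if_pos]
      rw [finsupp_pair_eq]; exact h
    · rw [if_neg h, if_neg]
      rw [finsupp_pair_eq]; exact h
  rw [Finset.sum_congr rfl hterm]
  by_cases H : m + n = p + q + r ∧ p ≤ m
  · rw [if_pos H]
    have hcg : ∀ k ∈ Finset.range (r + 1),
        (if p + k = m ∧ q + (r - k) = n then (Nat.choose r k : ZMod 2) else 0) =
        if k = m - p then (Nat.choose r k : ZMod 2) else 0 := by
      intro k hk
      rw [Finset.mem_range] at hk
      by_cases hkm : k = m - p
      · rw [if_pos hkm, if_pos (by omega)]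
      · rw [if_neg hkm, if_neg (by omega)]
    rw [Finset.sum_congr rfl hcg, Finset.sum_ite_eq' (Finset.range (r + 1)) (m - p)]
    split_ifs with h
    · rfl
    · rw [Finset.mem_range] at h
      rw [Nat.choose_eq_zero_of_lt (by omega)]
      simp
  · rw [if_neg H]
    apply Finset.sum_eq_zero
    intro k hk
    rw [Finset.mem_range] at hk
    rw [if_neg (by omega)]

/-- In `F₂[x₁,x₂]`, the polynomial
`(x₂^(a-2b) + (x₁+x₂)^(a-2b)) · x₁^b x₂^b (x₁+x₂)^b`, where `a > 2b > 0` and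
`a + b = 2^i + 2^(i-1)`, has zero coefficient on the monomial `x₁^(2^i) x₂^(2^(i-1))`. -/
theorem stmt1 (a b i : ℕ) (hb : 0 < b) (hab : 2 * b < a) (hi : 1 ≤ i)
    (hsum : a + b = 2 ^ i + 2 ^ (i - 1)) :
    MvPolynomial.coeff
      (Finsupp.single (0 : Fin 2) (2 ^ i) + Finsupp.single (1 : Fin 2) (2 ^ (i - 1)))
      (((X 1 ^ (a - 2 * b) + (X 0 + X 1) ^ (a - 2 * b)) *
        (X 0 ^ b * X 1 ^ b * (X 0 + X 1) ^ b)) : MvPolynomial (Fin 2) (ZMod 2)) = 0 := by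
  set c := a - 2 * b with hc
  have hca : c + 2 * b = a := by omega
  have hpow : 2 ^ i = 2 * 2 ^ (i - 1) := by
    rw [← pow_succ']; congr 1; omega
  -- b < 2^(i-1)
  have hblt : b < 2 ^ (i - 1) := by omega
  have expand : ((X 1 ^ c + (X 0 + X 1) ^ c) *
        (X 0 ^ b * X 1 ^ b * (X 0 + X 1) ^ b) : MvPolynomial (Fin 2) (ZMod 2))
      = X 0 ^ b * X 1 ^ (c + b) * (X 0 + X 1) ^ b
        + X 0 ^ b * X 1 ^ b * (X 0 + X 1) ^ (c + b) := by
    rw [pow_add, pow_add]; ring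
  rw [expand, MvPolynomial.coeff_add, coeff_aux, coeff_aux]
  rw [if_pos (by constructor <;> omega), if_pos (by constructor <;> omega)]
  have h1 : Nat.choose b (2 ^ i - b) = 0 :=
    Nat.choose_eq_zero_of_lt (by omega)
  have h2 : (2 : ℕ) ∣ Nat.choose (c + b) (2 ^ i - b) := by
    have hd : 0 < 2 ^ (i - 1) - b := by omega
    have := parity_lem (2 ^ (i - 1) - b) (i - 1) hd (by omega)
    have e1 : 2 ^ (i - 1) + 2 * (2 ^ (i - 1) - b) = c + b := by omega
    have e2 : 2 ^ (i - 1) + (2 ^ (i - 1) - b) = 2 ^ i - b := by omega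
    rwa [e1, e2] at this
  rw [h1]
  rw [(ZMod.natCast_eq_zero_iff _ 2).mpr h2]
  simp
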